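/- Let α be a homogeneous polynomial of degree 6 in the polynomial ring ℤ[h₁, h₂]. Then the following are equivalent: (i) there exists a homogeneous polynomial β of degree 5 in ℤ[h₁, h₂] with α = (h₁ + h₂)·β; (ii) the product (∑_{i=0}^{6} (−1)^i h₁^i h₂^{6−i})·α lies in the ideal of ℤ[h₁, h₂] generated by h₁^7 and h₂^7. -/

import Mathlib

open MvPolynomial


namespace LedivAux

lemma homog_decomp {n : ℕ} {p : MvPolynomial (Fin 2) ℤ} (hp : p.IsHomogeneous n) :
    p = ∑ i ∈ Finset.range (n+1),
      C (coeff (Finsupp.single 0 i + Finsupp.single 1 (n - i)) p) * X 0 ^ i * X 1 ^ (n - i) := by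
  ext m
  rw [MvPolynomial.coeff_sum]
  simp only [mul_assoc, X_pow_eq_monomial, monomial_mul, one_mul, coeff_C_mul, coeff_monomial,
    mul_ite, mul_one, mul_zero]
  by_cases h : m 0 + m 1 = n
  · rw [Finset.sum_eq_single (m 0)]
    · have hm : (Finsupp.single (0:Fin 2) (m 0) + Finsupp.single 1 (n - m 0)) = m := by
        ext j; fin_cases j <;> simp [Finsupp.single_apply] <;> omega
      rw [if_pos hm, hm]
    · intro b hb hne
      rw [if_neg]
      intro hd
      exact hne (by simpa using DFunLike.congr_fun hd 0)
    · intro hmem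
      exact absurd (Finset.mem_range.mpr (by omega)) hmem
  · rw [hp.coeff_eq_zero (by
      rw [show m.degree = m 0 + m 1 from ?_]
      · exact h
      · rw [Finsupp.degree_apply, Finset.sum_subset (Finset.subset_univ _)
          (fun i _ hi => Finsupp.notMem_support_iff.mp hi), Fin.sum_univ_two])]
    symm
    apply Finset.sum_eq_zero
    intro i hi
    rw [if_neg]
    intro hd
    apply h
    have h0 := DFunLike.congr_fun hd 0
    have h1 := DFunLike.congr_fun hd 1
    simp at h0 h1
    have := Finset.mem_range.mp hi
    omega

lemma decomp6 (α : MvPolynomial (Fin 2) ℤ) (hα : α.IsHomogeneous 6) :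
    α = C (coeff (Finsupp.single 0 0 + Finsupp.single 1 6) α) * X 1 ^ 6
      + C (coeff (Finsupp.single 0 1 + Finsupp.single 1 5) α) * X 0 * X 1 ^ 5
      + C (coeff (Finsupp.single 0 2 + Finsupp.single 1 4) α) * X 0 ^ 2 * X 1 ^ 4
      + C (coeff (Finsupp.single 0 3 + Finsupp.single 1 3) α) * X 0 ^ 3 * X 1 ^ 3
      + C (coeff (Finsupp.single 0 4 + Finsupp.single 1 2) α) * X 0 ^ 4 * X 1 ^ 2
      + C (coeff (Finsupp.single 0 5 + Finsupp.single 1 1) α) * X 0 ^ 5 * X 1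
      + C (coeff (Finsupp.single 0 6 + Finsupp.single 1 0) α) * X 0 ^ 6 := by
  conv_lhs => rw [homog_decomp hα]
  simp only [Finset.sum_range_succ, Finset.sum_range_zero]
  norm_num

lemma homog_term (c : ℤ) (i j n : ℕ) (h : i + j = n) :
    ((C c * X 0 ^ i * X 1 ^ j : MvPolynomial (Fin 2) ℤ)).IsHomogeneous n := by
  subst h
  rw [mul_assoc]
  exact ((isHomogeneous_X_pow _ _).mul (isHomogeneous_X_pow _ _)).C_mul _

lemma coeff66_left (p : MvPolynomial (Fin 2) ℤ) :
    coeff (Finsupp.single 0 6 + Finsupp.single 1 6) (X 0 ^ 7 * p) = 0 := by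
  rw [mul_comm, X_pow_eq_monomial, coeff_mul_monomial']
  rw [if_neg]
  intro hle
  have := (Finsupp.le_def.mp hle) 0
  simp [Finsupp.single_apply] at this

lemma coeff66_right (p : MvPolynomial (Fin 2) ℤ) :
    coeff (Finsupp.single 0 6 + Finsupp.single 1 6) (X 1 ^ 7 * p) = 0 := by
  rw [mul_comm, X_pow_eq_monomial, coeff_mul_monomial']
  rw [if_neg]
  intro hle
  have := (Finsupp.le_def.mp hle) 1
  simp [Finsupp.single_apply] at this

lemma coeff66_C (t : ℤ) :
    coeff (Finsupp.single 0 6 + Finsupp.single 1 6)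
      ((C t : MvPolynomial (Fin 2) ℤ) * X 0 ^ 6 * X 1 ^ 6) = t := by
  rw [mul_assoc, X_pow_eq_monomial, X_pow_eq_monomial, monomial_mul, one_mul,
    coeff_C_mul, coeff_monomial, if_pos rfl, mul_one]

end LedivAux


open LedivAux

/-- Lemma 3.3 (ledivclass): a degree-6 homogeneous class `α` in `ℤ[h₁,h₂]` is of the
form `(h₁+h₂)·β` with `β` homogeneous of degree 5 if and only if
`(∑_{i=0}^{6} (−1)^i h₁^i h₂^{6−i})·α` lies in the ideal `(h₁^7, h₂^7)`. -/
theorem ledivclass (α : MvPolynomial (Fin 2) ℤ) (hα : α.IsHomogeneous 6) :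
    (∃ β : MvPolynomial (Fin 2) ℤ, β.IsHomogeneous 5 ∧ α = (X 0 + X 1) * β) ↔
      (∑ i ∈ Finset.range 7,
          (-1 : MvPolynomial (Fin 2) ℤ) ^ i * (X 0) ^ i * (X 1) ^ (6 - i)) * α ∈
        Ideal.span ({(X 0) ^ 7, (X 1) ^ 7} : Set (MvPolynomial (Fin 2) ℤ)) := by
  have hS : (∑ i ∈ Finset.range 7,
      (-1 : MvPolynomial (Fin 2) ℤ) ^ i * (X 0) ^ i * (X 1) ^ (6 - i)) * (X 0 + X 1)
      = X 0 ^ 7 + X 1 ^ 7 := by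
    simp only [Finset.sum_range_succ, Finset.sum_range_zero]
    norm_num
    ring
  constructor
  · rintro ⟨β, hβ, rfl⟩
    rw [← mul_assoc, hS, add_mul]
    exact Ideal.add_mem _
      (Ideal.mul_mem_right _ _ (Ideal.subset_span (by simp)))
      (Ideal.mul_mem_right _ _ (Ideal.subset_span (by simp)))
  · intro hmem
    set a0 := coeff (Finsupp.single 0 0 + Finsupp.single 1 6) α with ha0
    set a1 := coeff (Finsupp.single 0 1 + Finsupp.single 1 5) α with ha1
    set a2 := coeff (Finsupp.single 0 2 + Finsupp.single 1 4) α with ha2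
    set a3 := coeff (Finsupp.single 0 3 + Finsupp.single 1 3) α with ha3
    set a4 := coeff (Finsupp.single 0 4 + Finsupp.single 1 2) α with ha4
    set a5 := coeff (Finsupp.single 0 5 + Finsupp.single 1 1) α with ha5
    set a6 := coeff (Finsupp.single 0 6 + Finsupp.single 1 0) α with ha6
    set B : MvPolynomial (Fin 2) ℤ :=
      C a0 * X 1 ^ 5 + C (a1 - a0) * X 0 * X 1 ^ 4 + C (a2 - a1 + a0) * X 0 ^ 2 * X 1 ^ 3
        + C (a3 - a2 + a1 - a0) * X 0 ^ 3 * X 1 ^ 2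
        + C (a4 - a3 + a2 - a1 + a0) * X 0 ^ 4 * X 1
        + C (a5 - a4 + a3 - a2 + a1 - a0) * X 0 ^ 5 with hB
    set T : ℤ := a0 - a1 + a2 - a3 + a4 - a5 + a6 with hT
    have key : (∑ i ∈ Finset.range 7,
        (-1 : MvPolynomial (Fin 2) ℤ) ^ i * (X 0) ^ i * (X 1) ^ (6 - i)) * α
        = X 0 ^ 7 * (B + C T * (- X 1 ^ 5 + X 0 * X 1 ^ 4 - X 0 ^ 2 * X 1 ^ 3
            + X 0 ^ 3 * X 1 ^ 2 - X 0 ^ 4 * X 1 + X 0 ^ 5))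
          + X 1 ^ 7 * B + C T * X 0 ^ 6 * X 1 ^ 6 := by
      conv_lhs => rw [decomp6 α hα]
      rw [hB, hT]
      simp only [Finset.sum_range_succ, Finset.sum_range_zero, map_sub, map_add,
        ← ha0, ← ha1, ← ha2, ← ha3, ← ha4, ← ha5, ← ha6]
      norm_num
      ring
    have hT0 : T = 0 := by
      obtain ⟨p, q, hpq⟩ := Ideal.mem_span_pair.mp hmem
      have h1 : coeff (Finsupp.single 0 6 + Finsupp.single 1 6)
          ((∑ i ∈ Finset.range 7,
            (-1 : MvPolynomial (Fin 2) ℤ) ^ i * (X 0) ^ i * (X 1) ^ (6 - i)) * α) = 0 := by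
        rw [← hpq, coeff_add, mul_comm p, mul_comm q, coeff66_left, coeff66_right, add_zero]
      rw [key, coeff_add, coeff_add, coeff66_left, coeff66_right, coeff66_C] at h1
      simpa using h1
    refine ⟨B, ?_, ?_⟩
    · rw [hB]
      repeat' apply MvPolynomial.IsHomogeneous.add
      · have h := homog_term a0 0 5 5 (by norm_num); rwa [pow_zero, mul_one] at h
      · have h := homog_term (a1 - a0) 1 4 5 (by norm_num); rwa [pow_one] at h
      · exact homog_term _ 2 3 5 (by norm_num)
      · exact homog_term _ 3 2 5 (by norm_num)
      · have h := homog_term (a4 - a3 + a2 - a1 + a0) 4 1 5 (by norm_num); rwa [pow_one] at h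
      · have h := homog_term (a5 - a4 + a3 - a2 + a1 - a0) 5 0 5 (by norm_num); rwa [pow_zero, mul_one] at h
    · have h6 : a6 = a5 - a4 + a3 - a2 + a1 - a0 := by
        rw [hT] at hT0; linarith
      rw [decomp6 α hα, ← ha0, ← ha1, ← ha2, ← ha3, ← ha4, ← ha5, ← ha6, h6, hB]
      simp only [map_sub, map_add]
      ring
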